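/- Let f : R -> [0,\infty) be a probability density supported on [-1,1] with f(x) \ge c_d for all |x| \le 1, and let p(x,t) = (\varphi_t * f)(x) where \varphi_t is the density of N(0,t). Then for any constant C > 0 and all t \le 1 and all |x| \le 1 + C\sqrt{t}, one has p(x,t) \ge c_d \cdot P(C \le Z \le C+2) where Z ~ N(0,1). In particular p(x,t) is bounded below by a positive constant independent of x, t, f. -/

import Mathlib

open MeasureTheory Real intervalIntegral

noncomputable def gaussDensity (t x : ℝ) : ℝ :=
  (Real.sqrt (2 * Real.pi * t))⁻¹ * Real.exp (-x ^ 2 / (2 * t))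

noncomputable def stdGauss (x : ℝ) : ℝ := gaussDensity 1 x

lemma stdGauss_def (x : ℝ) : stdGauss x = (Real.sqrt (2 * Real.pi))⁻¹ * Real.exp (-x ^ 2 / 2) := by
  simp [stdGauss, gaussDensity]

lemma stdGauss_pos (x : ℝ) : 0 < stdGauss x := by
  rw [stdGauss_def]
  positivity

lemma stdGauss_cont : Continuous stdGauss := by
  simp only [funext stdGauss_def]
  continuity

lemma stdGauss_intInt (a b : ℝ) : IntervalIntegrable stdGauss volume a b :=
  stdGauss_cont.intervalIntegrable a b

lemma stdGauss_even (x : ℝ) : stdGauss (-x) = stdGauss x := by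
  rw [stdGauss_def, stdGauss_def]; ring_nf

lemma stdGauss_anti {u v : ℝ} (hu : 0 ≤ u) (huv : u ≤ v) : stdGauss v ≤ stdGauss u := by
  rw [stdGauss_def, stdGauss_def]
  have : Real.exp (-v ^ 2 / 2) ≤ Real.exp (-u ^ 2 / 2) := by
    apply Real.exp_le_exp.2; nlinarith
  have h0 : (0:ℝ) ≤ (Real.sqrt (2 * Real.pi))⁻¹ := by positivity
  exact mul_le_mul_of_nonneg_left this h0

lemma gauss_shift {u v δ : ℝ} (hu : 0 ≤ u) (huv : u ≤ v) (hδ : 0 ≤ δ) :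
    ∫ z in (u+δ)..(v+δ), stdGauss z ≤ ∫ z in u..v, stdGauss z := by
  rw [← intervalIntegral.integral_comp_add_right stdGauss δ]
  have hle : ∀ x ∈ Set.Icc u v, stdGauss (x + δ) ≤ stdGauss x := fun x hx =>
    stdGauss_anti (le_trans hu hx.1) (by linarith)
  exact intervalIntegral.integral_mono_on huv
    ((stdGauss_cont.comp (continuous_id.add continuous_const)).intervalIntegrable u v)
    (stdGauss_intInt u v) hle

lemma gauss_sym (u v : ℝ) : ∫ z in u..v, stdGauss z = ∫ z in (-v)..(-u), stdGauss z := by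
  rw [← intervalIntegral.integral_comp_neg stdGauss]
  simp only [stdGauss_even]

lemma gauss_mono_interval {a b c d : ℝ} (hca : c ≤ a) (hab : a ≤ b) (hbd : b ≤ d) :
    ∫ z in a..b, stdGauss z ≤ ∫ z in c..d, stdGauss z :=
  intervalIntegral.integral_mono_interval hca hab hbd
    (Filter.Eventually.of_forall fun z => (stdGauss_pos z).le) (stdGauss_intInt c d)

lemma gauss_M {C a b : ℝ} (hC : 0 < C) (haC : a ≤ C) (hab : a + 2 ≤ b) (hbC : b ≤ C + 2)
    (hba : -b ≤ a) : ∫ z in C..(C+2), stdGauss z ≤ ∫ z in a..b, stdGauss z := by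
  set m : ℝ := max 0 (b - 2) with hm
  have hm0 : 0 ≤ m := le_max_left _ _
  have hmC : m ≤ C := max_le hC.le (by linarith)
  have step1 : ∫ z in C..(C+2), stdGauss z ≤ ∫ z in m..(m+2), stdGauss z := by
    have := gauss_shift (u := m) (v := m + 2) (δ := C - m) hm0 (by linarith) (by linarith)
    calc ∫ z in C..(C+2), stdGauss z = ∫ z in (m + (C-m))..((m+2) + (C-m)), stdGauss z := by
          ring_nf
      _ ≤ _ := this
  refine step1.trans ?_
  rcases le_total 2 b with h2b | hb2
  · have hmeq : m = b - 2 := max_eq_right (by linarith)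
    rw [hmeq]
    have : b - 2 + 2 = b := by ring
    rw [this]
    exact gauss_mono_interval (by linarith) (by linarith) le_rfl
  · have hb1 : 1 ≤ b := by linarith
    have hmeq : m = 0 := max_eq_left (by linarith)
    rw [hmeq, zero_add]
    have split1 : ∫ z in (0:ℝ)..2, stdGauss z
        = (∫ z in (0:ℝ)..b, stdGauss z) + ∫ z in b..2, stdGauss z :=
      (intervalIntegral.integral_add_adjacent_intervals (stdGauss_intInt 0 b)
        (stdGauss_intInt b 2)).symm
    have split2 : ∫ z in a..b, stdGauss z
        = (∫ z in a..(0:ℝ), stdGauss z) + ∫ z in (0:ℝ)..b, stdGauss z :=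
      (intervalIntegral.integral_add_adjacent_intervals (stdGauss_intInt a 0)
        (stdGauss_intInt 0 b)).symm
    have key : ∫ z in b..2, stdGauss z ≤ ∫ z in a..(0:ℝ), stdGauss z := by
      have h1 : ∫ z in b..2, stdGauss z ≤ ∫ z in (0:ℝ)..(2-b), stdGauss z := by
        have := gauss_shift (u := 0) (v := 2 - b) (δ := b) le_rfl (by linarith) (by linarith)
        calc ∫ z in b..2, stdGauss z = ∫ z in (0+b)..((2-b)+b), stdGauss z := by ring_nf
          _ ≤ _ := this
      have h2 : ∫ z in (0:ℝ)..(2-b), stdGauss z = ∫ z in (b-2)..(0:ℝ), stdGauss z := by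
        rw [gauss_sym]; ring_nf
      refine h1.trans (h2.le.trans ?_)
      exact gauss_mono_interval (by linarith) (by linarith) le_rfl
    rw [split1, split2]
    linarith

lemma gauss_M' {C a b : ℝ} (hC : 0 < C) (haC : a ≤ C) (hnbC : -b ≤ C) (hab : a + 2 ≤ b)
    (hbC : b ≤ C + 2) (hnaC : -a ≤ C + 2) :
    ∫ z in C..(C+2), stdGauss z ≤ ∫ z in a..b, stdGauss z := by
  rcases le_total (-b) a with h | h
  · exact gauss_M hC haC hab hbC h
  · rw [gauss_sym a b]
    have h1 : -b + 2 ≤ -a := by linarith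
    have h2 : -(-a) ≤ -b := by linarith
    exact gauss_M (a := -b) (b := -a) hC hnbC h1 hnaC h2

lemma icc_int_eq (g : ℝ → ℝ) {u v : ℝ} (h : u ≤ v) :
    ∫ z in Set.Icc u v, g z = ∫ z in u..v, g z := by
  rw [MeasureTheory.integral_Icc_eq_integral_Ioc, intervalIntegral.integral_of_le h]

lemma gaussDensity_nonneg (t y : ℝ) : 0 ≤ gaussDensity t y := by
  unfold gaussDensity; positivity

lemma gaussDensity_cont (t x : ℝ) : Continuous (fun μ : ℝ => gaussDensity t (x - μ)) := by
  unfold gaussDensity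
  fun_prop

lemma gaussDensity_le (t y : ℝ) (ht : 0 < t) : gaussDensity t y ≤ (Real.sqrt (2 * Real.pi * t))⁻¹ := by
  unfold gaussDensity
  have h1 : Real.exp (-y ^ 2 / (2 * t)) ≤ 1 := by
    rw [Real.exp_le_one_iff]
    have : 0 ≤ y^2 := sq_nonneg y
    have : 0 < 2*t := by linarith
    apply div_nonpos_of_nonpos_of_nonneg <;> nlinarith
  have h0 : (0:ℝ) ≤ (Real.sqrt (2 * Real.pi * t))⁻¹ := by positivity
  nlinarith

theorem diffused_density_lower_bound
    (f : ℝ → ℝ) (c_d : ℝ) (hc : 0 < c_d)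
    (hf0 : ∀ x, 0 ≤ f x) (hmeas : Measurable f)
    (hsupp : ∀ x, x ∉ Set.Icc (-1 : ℝ) 1 → f x = 0)
    (hfint : ∫ x, f x = 1)
    (hlb : ∀ x ∈ Set.Icc (-1 : ℝ) 1, c_d ≤ f x)
    (C t x : ℝ) (hC : 0 < C) (ht0 : 0 < t) (ht1 : t ≤ 1)
    (hx : |x| ≤ 1 + C * Real.sqrt t) :
    c_d * (∫ z in Set.Icc C (C + 2), stdGauss z)
        ≤ ∫ μ, gaussDensity t (x - μ) * f μ ∧
    0 < c_d * (∫ z in Set.Icc C (C + 2), stdGauss z) := by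
  set s := Real.sqrt t with hs_def
  have hs : 0 < s := Real.sqrt_pos.2 ht0
  have hs1 : s ≤ 1 := by
    rw [hs_def, show (1:ℝ) = Real.sqrt 1 by simp]
    exact Real.sqrt_le_sqrt ht1
  have hts : s * s = t := Real.mul_self_sqrt ht0.le
  obtain ⟨hx1, hx2⟩ := abs_le.1 hx
  set a := max (-(C+2)) ((x-1)/s) with ha_def
  set b := min (C+2) ((x+1)/s) with hb_def
  -- properties of a, b
  have hxdivC : (x-1)/s ≤ C := (div_le_iff₀ hs).2 (by nlinarith)
  have haC : a ≤ C := max_le (by linarith) hxdivC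
  have hCx : -C ≤ (x+1)/s := (le_div_iff₀ hs).2 (by nlinarith)
  have hnCb : -C ≤ b := le_min (by linarith) hCx
  have hnbC : -b ≤ C := by linarith
  have hdiff : (x-1)/s + 2 ≤ (x+1)/s := by
    have h2s : (2:ℝ) ≤ 2 / s := (le_div_iff₀ hs).2 (by nlinarith)
    have : (x+1)/s - (x-1)/s = 2/s := by field_simp; ring
    linarith
  have hab2 : a + 2 ≤ b := by
    have h1 : a ≤ (x+1)/s - 2 := max_le (by linarith) (by linarith)
    exact le_min (by linarith) (by linarith)
  have hab : a ≤ b := by linarith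
  have hbC : b ≤ C + 2 := min_le_left _ _
  have hnaC : -a ≤ C + 2 := by
    have := le_max_left (-(C+2)) ((x-1)/s); rw [← ha_def] at this; linarith
  -- μ-interval
  set lo := x - s * b with hlo_def
  set hi := x - s * a with hhi_def
  have hsb : s * b ≤ x + 1 := by
    have h := mul_le_mul_of_nonneg_left (min_le_right (C+2) ((x+1)/s)) hs.le
    rwa [mul_div_cancel₀ _ hs.ne'] at h
  have hsa : x - 1 ≤ s * a := by
    have h := mul_le_mul_of_nonneg_left (le_max_right (-(C+2)) ((x-1)/s)) hs.le
    rwa [mul_div_cancel₀ _ hs.ne'] at h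
  have hlo1 : -1 ≤ lo := by rw [hlo_def]; linarith
  have hhi1 : hi ≤ 1 := by rw [hhi_def]; linarith
  have hlohi : lo ≤ hi := by
    have := mul_le_mul_of_nonneg_left hab hs.le
    rw [hlo_def, hhi_def]; linarith
  -- integrability
  have hf_int : Integrable f := by
    by_contra h
    rw [MeasureTheory.integral_undef h] at hfint
    norm_num at hfint
  have hgc : Continuous (fun μ : ℝ => gaussDensity t (x - μ)) := gaussDensity_cont t x
  have hgnn : ∀ μ : ℝ, 0 ≤ gaussDensity t (x - μ) := fun μ => gaussDensity_nonneg t _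
  have hint : Integrable (fun μ => gaussDensity t (x - μ) * f μ) := by
    refine hf_int.bdd_mul (c := (Real.sqrt (2 * Real.pi * t))⁻¹) hgc.aestronglyMeasurable (Filter.Eventually.of_forall fun μ => ?_)
    rw [Real.norm_eq_abs, abs_of_nonneg (hgnn μ)]
    exact gaussDensity_le t _ ht0
  -- Step A
  have stepA : ∫ μ in Set.Icc lo hi, gaussDensity t (x - μ) * f μ
      ≤ ∫ μ, gaussDensity t (x - μ) * f μ :=
    MeasureTheory.setIntegral_le_integral hint
      (Filter.Eventually.of_forall fun μ => mul_nonneg (hgnn μ) (hf0 μ))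
  -- Step B
  have stepB : ∫ μ in Set.Icc lo hi, gaussDensity t (x - μ) * c_d
      ≤ ∫ μ in Set.Icc lo hi, gaussDensity t (x - μ) * f μ := by
    apply MeasureTheory.setIntegral_mono_on
      ((hgc.mul continuous_const).integrableOn_Icc)
      (hint.integrableOn)
      measurableSet_Icc
    intro μ hμ
    have hμ11 : μ ∈ Set.Icc (-1:ℝ) 1 := ⟨le_trans hlo1 hμ.1, le_trans hμ.2 hhi1⟩
    exact mul_le_mul_of_nonneg_left (hlb μ hμ11) (hgnn μ)
  -- Step C : change of variables
  have key : ∀ z : ℝ, s * gaussDensity t (s * z) = stdGauss z := by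
    intro z
    rw [stdGauss_def]
    unfold gaussDensity
    have h1 : Real.sqrt (2 * Real.pi * t) = Real.sqrt (2 * Real.pi) * s := by
      rw [Real.sqrt_mul (by positivity : (0:ℝ) ≤ 2 * Real.pi) t, ← hs_def]
    have h2 : -(s * z) ^ 2 / (2 * t) = -z ^ 2 / 2 := by
      rw [← hts]; field_simp
    rw [h1, h2, mul_inv]
    field_simp
  have stepC : ∫ μ in Set.Icc lo hi, gaussDensity t (x - μ)
      = ∫ z in Set.Icc a b, stdGauss z := by
    rw [icc_int_eq _ hlohi, icc_int_eq _ hab]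
    rw [intervalIntegral.integral_comp_sub_left (fun y => gaussDensity t y) x]
    have e1 : x - hi = s * a := by rw [hhi_def]; ring
    have e2 : x - lo = s * b := by rw [hlo_def]; ring
    rw [e1, e2, ← intervalIntegral.smul_integral_comp_mul_left (fun y => gaussDensity t y) s]
    rw [smul_eq_mul, ← intervalIntegral.integral_const_mul]
    exact intervalIntegral.integral_congr fun z _ => key z
  -- Step D
  have stepD : ∫ z in Set.Icc C (C+2), stdGauss z ≤ ∫ z in Set.Icc a b, stdGauss z := by
    rw [icc_int_eq _ (by linarith : C ≤ C + 2), icc_int_eq _ hab]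
    exact gauss_M' hC haC hnbC hab2 hbC hnaC
  -- positivity
  have hpos : 0 < ∫ z in Set.Icc C (C+2), stdGauss z := by
    rw [icc_int_eq _ (by linarith : C ≤ C + 2)]
    exact intervalIntegral.intervalIntegral_pos_of_pos_on (stdGauss_intInt C (C+2))
      (fun z _ => stdGauss_pos z) (by linarith)
  constructor
  · have hmul : ∫ μ in Set.Icc lo hi, gaussDensity t (x - μ) * c_d
        = c_d * ∫ z in Set.Icc a b, stdGauss z := by
      rw [← stepC, ← MeasureTheory.integral_const_mul]
      congr 1; ext μ; ring
    have h1 : c_d * ∫ z in Set.Icc C (C+2), stdGauss z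
        ≤ c_d * ∫ z in Set.Icc a b, stdGauss z :=
      mul_le_mul_of_nonneg_left stepD hc.le
    calc c_d * ∫ z in Set.Icc C (C+2), stdGauss z
        ≤ c_d * ∫ z in Set.Icc a b, stdGauss z := h1
      _ = ∫ μ in Set.Icc lo hi, gaussDensity t (x - μ) * c_d := hmul.symm
      _ ≤ ∫ μ in Set.Icc lo hi, gaussDensity t (x - μ) * f μ := stepB
      _ ≤ ∫ μ, gaussDensity t (x - μ) * f μ := stepA
  · exact mul_pos hc hpos
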